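/- If R contains ℚ, then A_R(n,m)^{S_n} is generated as an R-algebra by the power-sum type elements e_1(μ) = μ(1)+···+μ(n), where μ ranges over the monomials of positive degree in y_1,...,y_m of total degree at most n. -/

import Mathlib

open MvPolynomial Finset
open scoped Classical

noncomputable section

variable {R : Type*} [CommRing R]

/-- f(j): substitution y_i ↦ x_i(j). -/
def subst (m n : ℕ) (f : MvPolynomial (Fin m) R) (j : Fin n) :
    MvPolynomial (Fin m × Fin n) R :=
  rename (fun i => (i, j)) f

/-- the action of σ ∈ Sₙ on A_R(n,m). -/
def permRename (m n : ℕ) (σ : Equiv.Perm (Fin n)) :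
    MvPolynomial (Fin m × Fin n) R →ₐ[R] MvPolynomial (Fin m × Fin n) R :=
  rename (fun q => (q.1, σ q.2))

/-- invariant submodule A_R(n,m)^{Sₙ}. -/
def invSub (R : Type*) [CommRing R] (m n : ℕ) :
    Submodule R (MvPolynomial (Fin m × Fin n) R) where
  carrier := {p | ∀ σ : Equiv.Perm (Fin n), permRename m n σ p = p}
  add_mem' := fun ha hb σ => by simp [map_add, ha σ, hb σ]
  zero_mem' := fun σ => by simp
  smul_mem' := fun c p hp σ => by simp [map_smul, hp σ]

/-- invariant subalgebra A_R(n,m)^{Sₙ}. -/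
def invAlg (R : Type*) [CommRing R] (m n : ℕ) :
    Subalgebra R (MvPolynomial (Fin m × Fin n) R) where
  carrier := {p | ∀ σ : Equiv.Perm (Fin n), permRename m n σ p = p}
  add_mem' := fun ha hb σ => by simp [map_add, ha σ, hb σ]
  mul_mem' := fun ha hb σ => by simp [map_mul, ha σ, hb σ]
  algebraMap_mem' := fun r σ => by simp [permRename]

/-- e_α(f): coefficient of t^α in ∏ᵢ (1 + ∑ₕ tₕ fₕ(i)). -/
def eAlpha (m n : ℕ) {ι : Type*} [Fintype ι] (f : ι → MvPolynomial (Fin m) R) (α : ι → ℕ) :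
    MvPolynomial (Fin m × Fin n) R :=
  coeff (Finsupp.equivFunOnFinite.symm α)
    (∏ i : Fin n, (1 + ∑ h : ι, X h * C (subst m n (f h) i)))

/-- k-th elementary symmetric polynomial evaluated at v(1),…,v(n). -/
def esymVal {S : Type*} [CommRing S] (n : ℕ) (v : Fin n → S) (k : ℕ) : S :=
  ∑ A ∈ Finset.powersetCard k (Finset.univ : Finset (Fin n)), ∏ j ∈ A, v j

/-- multidegree of a monomial exponent. -/
def wdeg (m n : ℕ) (d : Fin m × Fin n →₀ ℕ) : Fin m → ℕ := fun i => ∑ j : Fin n, d (i, j)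

/-- multidegree-a component of A_R(n,m). -/
def comp (R : Type*) [CommRing R] (m n : ℕ) (a : Fin m → ℕ) :
    Submodule R (MvPolynomial (Fin m × Fin n) R) where
  carrier := {p | ∀ d ∈ p.support, wdeg m n d = a}
  add_mem' := fun ha hb d hd => by
    rcases Finset.mem_union.1 (MvPolynomial.support_add hd) with h | h
    · exact ha d h
    · exact hb d h
  zero_mem' := fun d hd => by simp at hd
  smul_mem' := fun c p hp d hd => hp d (MvPolynomial.support_smul hd)

/-- the restriction map πₙ₊₁ : A_R(n+1,m) → A_R(n,m), x_i(n+1) ↦ 0. -/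
def projDown (R : Type*) [CommRing R] (m n : ℕ) :
    MvPolynomial (Fin m × Fin (n+1)) R →ₐ[R] MvPolynomial (Fin m × Fin n) R :=
  aeval (fun p : Fin m × Fin (n+1) =>
    if h : (p.2 : ℕ) < n then X (p.1, ⟨p.2, h⟩) else 0)

/-- e_α for finitely supported α : M_m⁺ → ℕ. -/
def eAlphaM (R : Type*) [CommRing R] (m n : ℕ) (α : {d : Fin m →₀ ℕ // d ≠ 0} →₀ ℕ) :
    MvPolynomial (Fin m × Fin n) R :=
  eAlpha m n (fun l => monomial ((α.support.equivFin.symm l) : {d : Fin m →₀ ℕ // d ≠ 0}).1 (1 : R))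
    (fun l => α (α.support.equivFin.symm l))

/-- a monomial of positive degree is primitive if it is not a proper power. -/
def Primitive (m : ℕ) (d : Fin m →₀ ℕ) : Prop :=
  d ≠ 0 ∧ ∀ (e : Fin m →₀ ℕ) (k : ℕ), 2 ≤ k → d ≠ k • e


namespace Stmt15

/-- total degree of an exponent vector -/
def Mdeg {m : ℕ} (d : Fin m →₀ ℕ) : ℕ := ∑ i, d i

lemma Mdeg_eq_sum {m : ℕ} (d : Fin m →₀ ℕ) : (d.sum fun _ v => v) = Mdeg d :=
  Finsupp.sum_fintype _ _ (fun _ => rfl)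

lemma Mdeg_add {m : ℕ} (d e : Fin m →₀ ℕ) : Mdeg (d + e) = Mdeg d + Mdeg e := by
  simp [Mdeg, Finset.sum_add_distrib]

lemma Mdeg_pos {m : ℕ} {d : Fin m →₀ ℕ} (h : d ≠ 0) : 0 < Mdeg d := by
  rcases Finsupp.ne_iff.1 h with ⟨i, hi⟩
  simp only [Finsupp.coe_zero, Pi.zero_apply] at hi
  calc 0 < d i := Nat.pos_of_ne_zero hi
    _ ≤ Mdeg d := Finset.single_le_sum (f := fun i => d i) (fun _ _ => Nat.zero_le _) (mem_univ i)

def mon (m n : ℕ) (d : Fin m →₀ ℕ) (j : Fin n) : MvPolynomial (Fin m × Fin n) R :=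
  rename (fun i => (i, j)) (monomial d (1 : R))

lemma mon_add (m n : ℕ) (d e : Fin m →₀ ℕ) (j : Fin n) :
    mon (R := R) m n (d + e) j = mon m n d j * mon m n e j := by
  rw [mon, mon, mon, ← map_mul, monomial_mul, one_mul]

lemma mon_zero (m n : ℕ) (j : Fin n) : mon (R := R) m n 0 j = 1 := by
  simp [mon]

def psum (m n : ℕ) (d : Fin m →₀ ℕ) : MvPolynomial (Fin m × Fin n) R :=
  ∑ j : Fin n, mon m n d j

def NN (m n k : ℕ) (ν : Fin k → (Fin m →₀ ℕ)) : MvPolynomial (Fin m × Fin n) R :=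
  ∑ f : Fin k ↪ Fin n, ∏ s : Fin k, mon m n (ν s) (f s)

/-- extend an embedding by a new value -/
def esnoc {k n : ℕ} (f : Fin k ↪ Fin n) (j : Fin n) (hj : ∀ s, f s ≠ j) : Fin (k+1) ↪ Fin n :=
  ⟨Fin.snoc f j, by
    intro a b h
    induction a using Fin.lastCases with
    | last =>
      induction b using Fin.lastCases with
      | last => rfl
      | cast b =>
        rw [Fin.snoc_last, Fin.snoc_castSucc] at h
        exact absurd h.symm (hj b)
    | cast a =>
      induction b using Fin.lastCases with
      | last =>
        rw [Fin.snoc_castSucc, Fin.snoc_last] at h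
        exact absurd h (hj a)
      | cast b =>
        rw [Fin.snoc_castSucc, Fin.snoc_castSucc] at h
        exact congrArg Fin.castSucc (f.injective h)⟩

/-- restrict an embedding -/
def erest {k n : ℕ} (g : Fin (k+1) ↪ Fin n) : Fin k ↪ Fin n :=
  ⟨fun s => g (Fin.castSucc s), fun x y h => by
    have := g.injective h
    exact Fin.castSucc_injective _ this⟩

lemma NN_snoc (m n k : ℕ) (ν : Fin k → (Fin m →₀ ℕ)) (a : Fin m →₀ ℕ) :
    NN (R := R) m n (k+1) (Fin.snoc ν a)
      = ∑ f : Fin k ↪ Fin n, ∑ j ∈ (univ \ Finset.image f univ),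
          mon m n a j * ∏ s : Fin k, mon m n (ν s) (f s) := by
  classical
  rw [NN]
  rw [← Finset.sum_sigma (univ : Finset (Fin k ↪ Fin n))
    (fun f => univ \ Finset.image f univ)
    (fun p => mon (R := R) m n a p.2 * ∏ s : Fin k, mon m n (ν s) (p.1 s))]
  refine Finset.sum_bij' (i := fun g (_ : g ∈ univ) => (⟨erest g, g (Fin.last k)⟩ :
      Σ _ : Fin k ↪ Fin n, Fin n))
    (j := fun p hp => esnoc p.1 p.2 (fun s hs =>
      (Finset.mem_sdiff.1 (Finset.mem_sigma.1 hp).2).2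
        (Finset.mem_image.2 ⟨s, mem_univ s, hs⟩))) ?_ ?_ ?_ ?_ ?_
  · intro g _
    refine Finset.mem_sigma.2 ⟨mem_univ _, Finset.mem_sdiff.2 ⟨mem_univ _, ?_⟩⟩
    intro hmem
    rcases Finset.mem_image.1 hmem with ⟨s, -, hs⟩
    have := g.injective hs
    exact absurd this (Fin.castSucc_lt_last s).ne
  · intro p hp; exact mem_univ _
  · intro g _
    apply Function.Embedding.ext
    intro t
    exact congrFun (Fin.snoc_init_self ⇑g) t
  · intro p hp
    refine Sigma.ext ?_ (heq_of_eq ?_)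
    · apply Function.Embedding.ext
      intro s
      simp [esnoc, erest, Fin.snoc_castSucc]
      exact Fin.snoc_castSucc (α := fun _ => Fin n) p.2 p.1 s
    · simp [esnoc, erest, Fin.snoc_last]
      exact Fin.snoc_last (α := fun _ => Fin n) p.2 p.1
  · intro g _
    rw [Fin.prod_univ_castSucc]
    simp only [Fin.snoc_castSucc, Fin.snoc_last]
    rw [mul_comm]
    rfl


lemma update_prod (m n k : ℕ) (ν : Fin k → (Fin m →₀ ℕ)) (a : Fin m →₀ ℕ)
    (s : Fin k) (f : Fin k ↪ Fin n) :
    (∏ t : Fin k, mon (R := R) m n (Function.update ν s (ν s + a) t) (f t))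
      = mon m n a (f s) * ∏ t : Fin k, mon m n (ν t) (f t) := by
  classical
  have h1 : (fun t => mon (R := R) m n (Function.update ν s (ν s + a) t) (f t))
      = Function.update (fun t => mon (R := R) m n (ν t) (f t)) s
          (mon m n (ν s + a) (f s)) := by
    funext t
    by_cases ht : t = s
    · subst ht; simp [Function.update_self]
    · simp [Function.update_of_ne ht]
  rw [h1, Finset.prod_update_of_mem (mem_univ s), Finset.sdiff_singleton_eq_erase, mon_add,
    mul_comm (mon m n (ν s) (f s)), mul_assoc]
  congr 1
  exact Finset.mul_prod_erase univ (fun x => mon m n (ν x) (f x)) (mem_univ s)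

lemma psum_mul_NN (m n k : ℕ) (a : Fin m →₀ ℕ) (ν : Fin k → (Fin m →₀ ℕ)) :
    psum (R := R) m n a * NN m n k ν
      = NN m n (k+1) (Fin.snoc ν a)
        + ∑ s : Fin k, NN m n k (Function.update ν s (ν s + a)) := by
  classical
  rw [NN_snoc, psum, NN, Finset.sum_mul_sum]
  have key : ∀ f : Fin k ↪ Fin n,
      ∑ j : Fin n, mon (R := R) m n a j * ∏ s : Fin k, mon m n (ν s) (f s)
        = (∑ j ∈ (univ \ Finset.image f univ), mon m n a j * ∏ s : Fin k, mon m n (ν s) (f s))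
          + ∑ s : Fin k, ∏ t : Fin k, mon m n (Function.update ν s (ν s + a) t) (f t) := by
    intro f
    rw [← Finset.sum_sdiff (Finset.subset_univ (Finset.image f univ))]
    congr 1
    rw [Finset.sum_image (fun x _ y _ h => f.injective h)]
    exact Finset.sum_congr rfl fun s _ => (update_prod m n k ν a s f).symm
  rw [Finset.sum_comm]
  calc (∑ f : Fin k ↪ Fin n, ∑ j : Fin n, mon (R := R) m n a j * ∏ s : Fin k, mon m n (ν s) (f s))
      = ∑ f : Fin k ↪ Fin n,
        ((∑ j ∈ (univ \ Finset.image f univ), mon m n a j * ∏ s : Fin k, mon m n (ν s) (f s))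
          + ∑ s : Fin k, ∏ t : Fin k, mon m n (Function.update ν s (ν s + a) t) (f t)) :=
        Finset.sum_congr rfl fun f _ => key f
    _ = _ := by
        rw [Finset.sum_add_distrib]
        congr 1
        rw [Finset.sum_comm]
        rfl


/-- the generating set -/
def gens (R : Type*) [CommRing R] (m n : ℕ) : Set (MvPolynomial (Fin m × Fin n) R) :=
  {q | ∃ d : Fin m →₀ ℕ, d ≠ 0 ∧ (d.sum fun _ v => v) ≤ n ∧
    q = ∑ j : Fin n, subst m n (monomial d (1 : R)) j}

def BB (R : Type*) [CommRing R] (m n : ℕ) : Subalgebra R (MvPolynomial (Fin m × Fin n) R) :=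
  Algebra.adjoin R (gens R m n)

lemma qsmul_mem [Algebra ℚ R] {m n : ℕ} (q : ℚ) {x : MvPolynomial (Fin m × Fin n) R}
    (hx : x ∈ BB R m n) : q • x ∈ BB R m n := by
  rw [Algebra.smul_def, IsScalarTower.algebraMap_apply ℚ R (MvPolynomial (Fin m × Fin n) R)]
  exact mul_mem (Subalgebra.algebraMap_mem _ _) hx

lemma psum_zero_mem (m n : ℕ) : psum (R := R) m n 0 ∈ BB R m n := by
  have h : psum (R := R) m n 0 = (n : MvPolynomial (Fin m × Fin n) R) := by
    simp [psum, mon_zero]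
  rw [h]
  exact natCast_mem _ n

lemma psum_low_mem (m n : ℕ) {d : Fin m →₀ ℕ} (hd : d ≠ 0) (hdn : Mdeg d ≤ n) :
    psum (R := R) m n d ∈ BB R m n :=
  Algebra.subset_adjoin ⟨d, hd, by rw [Mdeg_eq_sum]; exact hdn, rfl⟩

lemma sum_Mdeg_update {m k : ℕ} (ν : Fin k → (Fin m →₀ ℕ)) (s : Fin k) (a : Fin m →₀ ℕ) :
    ∑ t : Fin k, Mdeg (Function.update ν s (ν s + a) t) = (∑ t : Fin k, Mdeg (ν t)) + Mdeg a := by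
  classical
  have h1 : (fun t => Mdeg (Function.update ν s (ν s + a) t))
      = Function.update (fun t => Mdeg (ν t)) s (Mdeg (ν s) + Mdeg a) := by
    funext t; by_cases ht : t = s
    · subst ht; simp [Mdeg_add]
    · simp [Function.update_of_ne ht]
  rw [h1, Finset.sum_update_of_mem (mem_univ s), Finset.sdiff_singleton_eq_erase,
    add_right_comm, Finset.add_sum_erase univ (fun t => Mdeg (ν t)) (mem_univ s)]

lemma NN_mem (m n : ℕ) [Algebra ℚ R] : ∀ (k : ℕ) (ν : Fin k → (Fin m →₀ ℕ)),
    (∀ e : Fin m →₀ ℕ, Mdeg e ≤ ∑ s, Mdeg (ν s) → psum (R := R) m n e ∈ BB R m n) →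
    NN (R := R) m n k ν ∈ BB R m n := by
  intro k
  induction k with
  | zero =>
    intro ν _
    have h : NN (R := R) m n 0 ν = (Fintype.card (Fin 0 ↪ Fin n) : ℕ) • 1 := by
      rw [NN]
      simp only [Fin.prod_univ_zero]
      rw [Finset.sum_const, Finset.card_univ]
    rw [h]
    exact nsmul_mem (one_mem _) _
  | succ k IH =>
    intro ν hyp
    have hrec := psum_mul_NN (R := R) m n k (ν (Fin.last k)) (Fin.init ν)
    rw [Fin.snoc_init_self] at hrec
    have hν : NN (R := R) m n (k+1) ν
        = psum m n (ν (Fin.last k)) * NN m n k (Fin.init ν)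
          - ∑ s : Fin k, NN m n k
              (Function.update (Fin.init ν) s (Fin.init ν s + ν (Fin.last k))) := by
      exact eq_sub_of_add_eq hrec.symm
    have hsum : ∀ e : Fin m →₀ ℕ, Mdeg e ≤ ∑ s : Fin k, Mdeg (Fin.init ν s) →
        psum (R := R) m n e ∈ BB R m n := by
      intro e he
      apply hyp
      refine he.trans ?_
      rw [Fin.sum_univ_castSucc (f := fun s => Mdeg (ν s))]
      exact Nat.le_add_right _ _
    rw [hν]
    refine sub_mem (mul_mem ?_ ?_) (sum_mem fun s _ => ?_)
    · apply hyp
      rw [Fin.sum_univ_castSucc (f := fun s => Mdeg (ν s))]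
      exact Nat.le_add_left _ _
    · exact IH _ hsum
    · apply IH
      intro e he
      apply hyp
      refine he.trans (le_of_eq ?_)
      rw [sum_Mdeg_update, Fin.sum_univ_castSucc (f := fun s => Mdeg (ν s))]
      rfl


lemma NN_one (m n : ℕ) (ν : Fin 1 → (Fin m →₀ ℕ)) : NN (R := R) m n 1 ν = psum m n (ν 0) := by
  rw [NN, psum]
  refine Fintype.sum_bijective (fun f : Fin 1 ↪ Fin n => f 0) ⟨?_, ?_⟩ _ _ ?_
  · intro f g h
    apply Function.Embedding.ext
    intro s
    rw [Subsingleton.elim s 0]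
    exact h
  · intro j
    exact ⟨⟨fun _ => j, fun a b _ => Subsingleton.elim a b⟩, rfl⟩
  · intro f
    rw [Fin.prod_univ_one]

lemma sum_update_add {k : ℕ} {M : Type*} [AddCommMonoid M] (g : Fin k → M) (s : Fin k) (a : M) :
    ∑ t : Fin k, Function.update g s (g s + a) t = (∑ t : Fin k, g t) + a := by
  classical
  rw [Finset.sum_update_of_mem (mem_univ s), Finset.sdiff_singleton_eq_erase,
    add_right_comm, Finset.add_sum_erase univ g (mem_univ s)]

lemma add_ne_zero' {m : ℕ} {d e : Fin m →₀ ℕ} (hd : d ≠ 0) : d + e ≠ 0 := by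
  intro h
  have h1 : Mdeg (d + e) = 0 := by rw [h]; simp [Mdeg]
  rw [Mdeg_add] at h1
  exact absurd (Nat.eq_zero_of_add_eq_zero_right h1) (Mdeg_pos hd).ne'

lemma NN_congr (m n D : ℕ) [Algebra ℚ R]
    (hps : ∀ e : Fin m →₀ ℕ, Mdeg e < D → psum (R := R) m n e ∈ BB R m n) :
    ∀ (k : ℕ) (ν : Fin (k+1) → (Fin m →₀ ℕ)), (∀ s, ν s ≠ 0) →
    (∑ s, Mdeg (ν s)) = D →
    NN (R := R) m n (k+1) ν - ((-1 : ℚ)^k * (Nat.factorial k : ℚ)) • psum m n (∑ s, ν s)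
      ∈ BB R m n := by
  intro k
  induction k with
  | zero =>
    intro ν hν hD
    have h1 : (∑ s : Fin 1, ν s) = ν 0 := Fin.sum_univ_one _
    have h2 : ((-1 : ℚ)^0 * (Nat.factorial 0 : ℚ)) = 1 := by norm_num
    rw [NN_one, h1, h2, one_smul, sub_self]
    exact zero_mem _
  | succ k IH =>
    intro ν hν hD
    set a := ν (Fin.last (k+1)) with ha
    set ν' := Fin.init ν with hν'def
    set d := ∑ s : Fin (k+2), ν s with hd
    set c : ℚ := (-1 : ℚ)^k * (Nat.factorial k : ℚ) with hc
    set c' : ℚ := (-1 : ℚ)^(k+1) * (Nat.factorial (k+1) : ℚ) with hc'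
    set p := psum (R := R) m n d with hp
    have hsplit : (∑ s : Fin (k+2), Mdeg (ν s)) = (∑ s : Fin (k+1), Mdeg (ν' s)) + Mdeg a := by
      rw [Fin.sum_univ_castSucc (f := fun s => Mdeg (ν s))]; rfl
    have hapos : 0 < Mdeg a := Mdeg_pos (hν _)
    have hprefpos : 0 < ∑ s : Fin (k+1), Mdeg (ν' s) := by
      calc 0 < Mdeg (ν' 0) := Mdeg_pos (hν _)
        _ ≤ _ := Finset.single_le_sum (f := fun s => Mdeg (ν' s))
          (fun _ _ => Nat.zero_le _) (mem_univ 0)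
    have hDsum : (∑ s : Fin (k+1), Mdeg (ν' s)) + Mdeg a = D := by
      rw [← hsplit]; exact hD
    have h1 : NN (R := R) m n (k+1) ν' ∈ BB R m n := by
      apply NN_mem
      intro e he
      exact hps e (by omega)
    have h2 : psum (R := R) m n a ∈ BB R m n := hps a (by omega)
    have hdsum : (∑ s : Fin (k+1), ν' s) + a = d := by
      rw [hd, Fin.sum_univ_castSucc (f := fun s => ν s)]; rfl
    have h3 : ∀ s : Fin (k+1),
        NN (R := R) m n (k+1) (Function.update ν' s (ν' s + a)) - c • p ∈ BB R m n := by
      intro s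
      have hnz : ∀ t, Function.update ν' s (ν' s + a) t ≠ 0 := by
        intro t
        by_cases ht : t = s
        · subst ht; rw [Function.update_self]; exact add_ne_zero' (hν _)
        · rw [Function.update_of_ne ht]; exact hν _
      have htot : (∑ t : Fin (k+1), Mdeg (Function.update ν' s (ν' s + a) t)) = D := by
        rw [sum_Mdeg_update, hDsum]
      have hsum2 : (∑ t : Fin (k+1), Function.update ν' s (ν' s + a) t) = d := by
        rw [sum_update_add, hdsum]
      have := IH (Function.update ν' s (ν' s + a)) hnz htot
      rwa [hsum2] at this
    have hrec := psum_mul_NN (R := R) m n (k+1) a ν'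
    rw [hν'def, Fin.snoc_init_self] at hrec
    have hrec' : NN (R := R) m n (k+2) ν
        = psum m n a * NN m n (k+1) ν'
          - ∑ s : Fin (k+1), NN m n (k+1) (Function.update ν' s (ν' s + a)) :=
      eq_sub_of_add_eq hrec.symm
    have hnsmul : (k+1) • (c • p) = (((k+1 : ℕ) : ℚ) * c) • p := by
      rw [← Nat.cast_smul_eq_nsmul ℚ, smul_smul]
    have key : NN (R := R) m n (k+2) ν - c' • p
        = (psum m n a * NN m n (k+1) ν'
            - ∑ s : Fin (k+1), (NN m n (k+1) (Function.update ν' s (ν' s + a)) - c • p))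
          - ((((k+1 : ℕ) : ℚ) * c + c') • p) := by
      rw [hrec', Finset.sum_sub_distrib, Finset.sum_const, Finset.card_univ,
        Fintype.card_fin, hnsmul, add_smul]
      abel
    have hcoef : (((k+1 : ℕ) : ℚ) * c + c') = 0 := by
      rw [hc, hc', Nat.factorial_succ]
      push_cast
      ring
    rw [key, hcoef, zero_smul, sub_zero]
    exact sub_mem (mul_mem h2 h1) (sum_mem fun s _ => h3 s)


lemma Mdeg_sum {m : ℕ} {ι : Type*} (s : Finset ι) (g : ι → (Fin m →₀ ℕ)) :
    Mdeg (∑ t ∈ s, g t) = ∑ t ∈ s, Mdeg (g t) := by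
  simp only [Mdeg, Finsupp.finset_sum_apply]
  rw [Finset.sum_comm]

lemma exists_decomp (m : ℕ) : ∀ (k : ℕ) (d : Fin m →₀ ℕ), k + 1 ≤ Mdeg d →
    ∃ ν : Fin (k+1) → (Fin m →₀ ℕ), (∀ s, ν s ≠ 0) ∧ (∑ s, ν s) = d := by
  intro k
  induction k with
  | zero =>
    intro d hd
    refine ⟨fun _ => d, fun s => ?_, Fin.sum_univ_one _⟩
    intro h
    have h' : d = 0 := h
    rw [h'] at hd
    simp [Mdeg] at hd
  | succ k IH =>
    intro d hd
    have hdpos : 0 < Mdeg d := by omega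
    have hne : d ≠ 0 := by
      intro h; rw [h] at hdpos; simp [Mdeg] at hdpos
    rcases Finsupp.ne_iff.1 hne with ⟨i, hi⟩
    simp only [Finsupp.coe_zero, Pi.zero_apply] at hi
    have hdi : 1 ≤ d i := Nat.pos_of_ne_zero hi
    set u : Fin m →₀ ℕ := Finsupp.single i 1 with hu
    set d' : Fin m →₀ ℕ := d - u with hd'
    have hsum : d' + u = d := by
      ext a
      by_cases hai : a = i
      · subst hai
        simp only [hd', hu, Finsupp.add_apply, Finsupp.tsub_apply, Finsupp.single_eq_same]
        omega
      · simp only [hd', hu, Finsupp.add_apply, Finsupp.tsub_apply,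
          Finsupp.single_eq_of_ne' (Ne.symm hai)]
        omega
    have hMu : Mdeg u = 1 := by
      rw [hu, Mdeg, Finset.sum_eq_single i (fun b _ hb => Finsupp.single_eq_of_ne'
        (Ne.symm hb)) (fun h => absurd (mem_univ i) h)]
      exact Finsupp.single_eq_same
    have hMd' : k + 1 ≤ Mdeg d' := by
      have : Mdeg d' + Mdeg u = Mdeg d := by rw [← Mdeg_add, hsum]
      omega
    rcases IH d' hMd' with ⟨ν', hν', hνsum⟩
    refine ⟨Fin.snoc ν' u, ?_, ?_⟩
    · intro s
      induction s using Fin.lastCases with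
      | last =>
        rw [Fin.snoc_last]
        exact fun h => by simp [hu, Finsupp.single_eq_zero] at h
      | cast s =>
        rw [Fin.snoc_castSucc]
        exact hν' s
    · rw [Fin.sum_univ_castSucc (f := fun s => Fin.snoc ν' u s)]
      simp only [Fin.snoc_castSucc, Fin.snoc_last]
      rw [hνsum, hsum]

lemma psum_mem_all (m n : ℕ) [Algebra ℚ R] (d : Fin m →₀ ℕ) :
    psum (R := R) m n d ∈ BB R m n := by
  have main : ∀ (D : ℕ) (d : Fin m →₀ ℕ), Mdeg d = D → psum (R := R) m n d ∈ BB R m n := by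
    intro D
    induction D using Nat.strong_induction_on with
    | _ D IH =>
      intro d hdD
      by_cases h0 : d = 0
      · subst h0; exact psum_zero_mem m n
      by_cases hn : Mdeg d ≤ n
      · exact psum_low_mem m n h0 hn
      · push_neg at hn
        have hd1 : n + 1 ≤ Mdeg d := hn
        rcases exists_decomp m n d hd1 with ⟨ν, hν, hνsum⟩
        have hps : ∀ e : Fin m →₀ ℕ, Mdeg e < D → psum (R := R) m n e ∈ BB R m n := by
          intro e he
          exact IH (Mdeg e) (by omega) e rfl
        have htot : (∑ s : Fin (n+1), Mdeg (ν s)) = D := by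
          rw [← hdD, ← hνsum, Mdeg_sum]
        have hcon := NN_congr m n D hps n ν hν htot
        rw [hνsum] at hcon
        have hempty : NN (R := R) m n (n+1) ν = 0 := by
          have hie : IsEmpty (Fin (n+1) ↪ Fin n) := by
            refine ⟨fun f => ?_⟩
            have := Fintype.card_le_of_embedding f
            simp at this
          rw [NN, Finset.univ_eq_empty, Finset.sum_empty]
        rw [hempty, zero_sub] at hcon
        have hmem := neg_mem hcon
        rw [neg_neg] at hmem
        have := qsmul_mem (((-1 : ℚ)^n * (Nat.factorial n : ℚ))⁻¹) hmem
        rwa [smul_smul, inv_mul_cancel₀ (by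
          apply mul_ne_zero
          · exact pow_ne_zero _ (by norm_num)
          · exact_mod_cast Nat.factorial_ne_zero n), one_smul] at this
  exact main (Mdeg d) d rfl


def cols {m n : ℕ} (d : Fin m × Fin n →₀ ℕ) (j : Fin n) : Fin m →₀ ℕ :=
  Finsupp.equivFunOnFinite.symm (fun i => d (i, j))

lemma col_sum (m n : ℕ) (d : Fin m × Fin n →₀ ℕ) :
    (∑ j : Fin n, (cols d j).mapDomain (fun i => (i, j))) = d := by
  ext q
  rcases q with ⟨i, j0⟩
  rw [Finsupp.finset_sum_apply]
  rw [Finset.sum_eq_single j0 ?_ ?_]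
  · rw [Finsupp.mapDomain_apply (fun a b h => congrArg Prod.fst h)]
    rfl
  · intro j _ hj
    apply Finsupp.mapDomain_notin_range
    rintro ⟨x, hx⟩
    exact hj (congrArg Prod.snd hx)
  · intro h; exact absurd (mem_univ j0) h

lemma mon_eq_monomial (m n : ℕ) (e : Fin m →₀ ℕ) (j : Fin n) :
    mon (R := R) m n e j = monomial (e.mapDomain (fun i => (i, j))) (1 : R) := by
  rw [mon, rename_monomial]

lemma monomial_factor (m n : ℕ) (d : Fin m × Fin n →₀ ℕ) :
    monomial d (1 : R) = ∏ j : Fin n, mon (R := R) m n (cols d j) j := by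
  conv_lhs => rw [← col_sum m n d]
  rw [monomial_sum_one]
  exact Finset.prod_congr rfl fun j _ => (mon_eq_monomial m n _ j).symm

lemma permRename_mon (m n : ℕ) (σ : Equiv.Perm (Fin n)) (e : Fin m →₀ ℕ) (j : Fin n) :
    permRename m n σ (mon (R := R) m n e j) = mon m n e (σ j) := by
  show rename _ (rename _ _) = _
  rw [rename_rename]
  rfl

def permEmbEquiv (n : ℕ) : Equiv.Perm (Fin n) ≃ (Fin n ↪ Fin n) where
  toFun σ := σ.toEmbedding
  invFun f := Equiv.ofBijective f ((Finite.injective_iff_bijective).1 f.injective)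
  left_inv σ := by ext x; rfl
  right_inv f := by ext x; rfl

lemma Sym_mem (m n : ℕ) [Algebra ℚ R] (d : Fin m × Fin n →₀ ℕ) :
    (∑ σ : Equiv.Perm (Fin n), permRename m n σ (monomial d (1 : R))) ∈ BB R m n := by
  have h1 : ∀ σ : Equiv.Perm (Fin n),
      permRename m n σ (monomial d (1 : R))
        = ∏ j : Fin n, mon (R := R) m n (cols d j) (σ j) := by
    intro σ
    rw [monomial_factor, map_prod]
    exact Finset.prod_congr rfl fun j _ => permRename_mon m n σ _ j
  have h2 : (∑ σ : Equiv.Perm (Fin n), permRename m n σ (monomial d (1 : R)))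
      = NN (R := R) m n n (cols d) := by
    rw [NN, ← Equiv.sum_comp (permEmbEquiv n)
      (fun f : Fin n ↪ Fin n => ∏ s : Fin n, mon (R := R) m n (cols d s) (f s))]
    exact Finset.sum_congr rfl fun σ _ => h1 σ
  rw [h2]
  exact NN_mem m n n (cols d) (fun e _ => psum_mem_all m n e)

lemma invariant_mem (m n : ℕ) [Algebra ℚ R] (p : MvPolynomial (Fin m × Fin n) R)
    (hp : ∀ σ : Equiv.Perm (Fin n), permRename m n σ p = p) : p ∈ BB R m n := by
  have hT : (∑ σ : Equiv.Perm (Fin n), permRename m n σ p) = (Nat.factorial n : ℕ) • p := by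
    rw [Finset.sum_congr rfl fun σ _ => hp σ, Finset.sum_const, Finset.card_univ,
      Fintype.card_perm, Fintype.card_fin]
  have hrepr : p = ∑ d ∈ p.support, monomial d (coeff d p) := (support_sum_monomial_coeff p).symm
  have hTmem : (∑ σ : Equiv.Perm (Fin n), permRename m n σ p) ∈ BB R m n := by
    have heq : (∑ σ : Equiv.Perm (Fin n), permRename m n σ p)
        = ∑ d ∈ p.support, C (coeff d p)
            * ∑ σ : Equiv.Perm (Fin n), permRename m n σ (monomial d (1 : R)) := by
      conv_lhs => rw [hrepr]
      rw [Finset.sum_congr rfl fun σ _ => map_sum (permRename m n σ) _ _, Finset.sum_comm]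
      refine Finset.sum_congr rfl fun d _ => ?_
      rw [Finset.mul_sum]
      refine Finset.sum_congr rfl fun σ _ => ?_
      rw [show monomial d (coeff d p) = C (coeff d p) * monomial d (1 : R) by
        rw [C_mul_monomial, mul_one], map_mul]
      congr 1
      show rename _ (C _) = _
      rw [rename_C]
    rw [heq]
    refine sum_mem fun d _ => mul_mem ?_ (Sym_mem m n d)
    rw [show (C (coeff d p) : MvPolynomial (Fin m × Fin n) R)
      = algebraMap R _ (coeff d p) from rfl]
    exact Subalgebra.algebraMap_mem _ _
  rw [hT] at hTmem
  have h2 := qsmul_mem ((Nat.factorial n : ℚ))⁻¹ hTmem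
  rwa [← Nat.cast_smul_eq_nsmul ℚ, smul_smul,
    inv_mul_cancel₀ (by exact_mod_cast Nat.factorial_ne_zero n), one_smul] at h2

end Stmt15

/-- if R ⊇ ℚ, then A_R(n,m)^{Sₙ} is generated as an R-algebra by the
e₁(μ) = μ(1)+⋯+μ(n) with μ a monomial of positive degree and total degree ≤ n. -/
theorem stmt15 (R : Type*) [CommRing R] [Algebra ℚ R] (m n : ℕ) :
    invAlg R m n = Algebra.adjoin R
      {q : MvPolynomial (Fin m × Fin n) R | ∃ d : Fin m →₀ ℕ, d ≠ 0 ∧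
        (d.sum fun _ v => v) ≤ n ∧
        q = ∑ j : Fin n, subst m n (monomial d (1 : R)) j} := by
  apply le_antisymm
  · intro p hp
    exact Stmt15.invariant_mem m n p hp
  · rw [Algebra.adjoin_le_iff]
    rintro q ⟨d, hd0, hdn, rfl⟩
    intro σ
    rw [map_sum]
    show (∑ x : Fin n, (permRename m n σ) (Stmt15.mon m n d x))
        = ∑ j : Fin n, Stmt15.mon (R := R) m n d j
    rw [Finset.sum_congr rfl fun j _ => Stmt15.permRename_mon m n σ d j]
    exact Equiv.sum_comp σ (fun j => Stmt15.mon (R := R) m n d j)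

end
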